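/- Let A₁ and A₂ be symmetric positive semi-definite K×K real matrices, and suppose the upper-left k×k block of A₁ is positive definite and there is a vector v ∈ ℝ^{k+1} with last coordinate −1 such that ⟨v, (A₂)_{[1:k+1,1:k+1]} v⟩ > 0. Then the upper-left (k+1)×(k+1) block of A₁ + A₂ is positive definite. -/

import Mathlib

open Matrix

/-- Rank-correction (Lemma 2): let `A₁, A₂` be symmetric PSD `K×K` matrices, the
upper-left `k×k` block of `A₁` positive definite, and `v = (β, −1) ∈ ℝ^{k+1}` with `β`
minimizing `β' ↦ ⟨(β',−1), (A₁)_{[1:k+1]}(β',−1)⟩`, such that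
`⟨v, (A₂)_{[1:k+1]} v⟩ > 0`. Then the upper-left `(k+1)×(k+1)` block of `A₁ + A₂` is
positive definite. -/
theorem stmt7 (K k : ℕ) (hK : k + 1 ≤ K)
    (A₁ A₂ : Matrix (Fin K) (Fin K) ℝ)
    (hA₁ : A₁.PosSemidef) (hA₂ : A₂.PosSemidef)
    (hBpd : (A₁.submatrix (Fin.castLE (Nat.le_of_succ_le hK))
        (Fin.castLE (Nat.le_of_succ_le hK))).PosDef)
    (β : Fin k → ℝ)
    (hmin : ∀ β' : Fin k → ℝ,
      (Fin.snoc β (-1) : Fin (k + 1) → ℝ) ⬝ᵥ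
          (A₁.submatrix (Fin.castLE hK) (Fin.castLE hK)).mulVec (Fin.snoc β (-1))
        ≤ (Fin.snoc β' (-1) : Fin (k + 1) → ℝ) ⬝ᵥ
            (A₁.submatrix (Fin.castLE hK) (Fin.castLE hK)).mulVec (Fin.snoc β' (-1)))
    (hpos : 0 < (Fin.snoc β (-1) : Fin (k + 1) → ℝ) ⬝ᵥ
        (A₂.submatrix (Fin.castLE hK) (Fin.castLE hK)).mulVec (Fin.snoc β (-1))) :
    ((A₁ + A₂).submatrix (Fin.castLE hK) (Fin.castLE hK)).PosDef := by
  set f : Fin (k+1) → Fin K := Fin.castLE hK with hf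
  set g : Fin k → Fin K := Fin.castLE (Nat.le_of_succ_le hK) with hg
  set B₁ := A₁.submatrix f f with hB₁
  set B₂ := A₂.submatrix f f with hB₂
  have hB₁psd : B₁.PosSemidef := hA₁.submatrix f
  have hB₂psd : B₂.PosSemidef := hA₂.submatrix f
  set v : Fin (k+1) → ℝ := Fin.snoc β (-1) with hv
  have key : ∀ u : Fin (k+1) → ℝ, u (Fin.last k) = 0 →
      u ⬝ᵥ B₁ *ᵥ u = (u ∘ Fin.castSucc) ⬝ᵥ (A₁.submatrix g g) *ᵥ (u ∘ Fin.castSucc) := by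
    intro u hu
    have hfg : ∀ i : Fin k, f i.castSucc = g i := fun i => rfl
    simp [dotProduct, Matrix.mulVec, Fin.sum_univ_castSucc, hu, hB₁, hfg, Function.comp]
  refine Matrix.PosDef.of_dotProduct_mulVec_pos ((hA₁.1.add hA₂.1).submatrix f) ?_
  intro x hx
  have h1 : 0 ≤ x ⬝ᵥ B₁ *ᵥ x := by simpa using hB₁psd.dotProduct_mulVec_nonneg x
  have h2 : 0 ≤ x ⬝ᵥ B₂ *ᵥ x := by simpa using hB₂psd.dotProduct_mulVec_nonneg x
  have hsplit : star x ⬝ᵥ ((A₁ + A₂).submatrix f f) *ᵥ x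
      = x ⬝ᵥ B₁ *ᵥ x + x ⬝ᵥ B₂ *ᵥ x := by
    simp [Matrix.submatrix_add, Matrix.add_mulVec, dotProduct_add, hB₁, hB₂]
  rw [hsplit]
  rcases lt_or_eq_of_le h1 with h1' | h0
  · linarith
  have h0 : x ⬝ᵥ B₁ *ᵥ x = 0 := h0.symm
  -- last coordinate is nonzero
  set c := x (Fin.last k) with hc
  have hcne : c ≠ 0 := by
    intro hc0
    have hy : (x ∘ Fin.castSucc : Fin k → ℝ) ≠ 0 := by
      intro hy0
      apply hx
      funext i
      refine Fin.lastCases ?_ ?_ i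
      · simpa using hc0
      · intro j
        have := congrFun hy0 j
        simpa using this
    have hpos' := hBpd.dotProduct_mulVec_pos hy
    have := key x (by simpa using hc0)
    rw [h0] at this
    simp only [star_trivial] at hpos'
    rw [← this] at hpos'
    exact lt_irrefl _ hpos'
  set w : Fin (k+1) → ℝ := (-c⁻¹) • x with hw
  have hwlast : w (Fin.last k) = -1 := by
    simp [hw, ← hc]
    field_simp
  have hwsnoc : (Fin.snoc (w ∘ Fin.castSucc) (-1) : Fin (k+1) → ℝ) = w := by
    rw [← hwlast]
    exact Fin.snoc_init_self w
  have qw : w ⬝ᵥ B₁ *ᵥ w = 0 := by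
    simp only [hw, Matrix.mulVec_smul, smul_dotProduct, dotProduct_smul, h0, smul_zero]
  have qv : v ⬝ᵥ B₁ *ᵥ v = 0 := by
    have hle := hmin (w ∘ Fin.castSucc)
    rw [hwsnoc] at hle
    rw [qw] at hle
    have hge : 0 ≤ v ⬝ᵥ B₁ *ᵥ v := by simpa using hB₁psd.dotProduct_mulVec_nonneg v
    linarith
  have hv0 : B₁ *ᵥ v = 0 := by
    rw [← hB₁psd.dotProduct_mulVec_zero_iff]
    simpa using qv
  have hw0 : B₁ *ᵥ w = 0 := by
    rw [← hB₁psd.dotProduct_mulVec_zero_iff]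
    simpa using qw
  set u : Fin (k+1) → ℝ := v - w with hu
  have hulast : u (Fin.last k) = 0 := by
    simp [hu, hwlast, hv]
  have hBu : B₁ *ᵥ u = 0 := by
    rw [hu, Matrix.mulVec_sub, hv0, hw0, sub_zero]
  have quz : u ⬝ᵥ B₁ *ᵥ u = 0 := by rw [hBu, dotProduct_zero]
  have huc : (u ∘ Fin.castSucc : Fin k → ℝ) = 0 := by
    by_contra h
    have := hBpd.dotProduct_mulVec_pos h
    simp only [star_trivial] at this
    rw [← key u hulast, quz] at this
    exact lt_irrefl _ this
  have huz : u = 0 := by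
    funext i
    refine Fin.lastCases ?_ ?_ i
    · simpa using hulast
    · intro j
      simpa using congrFun huc j
  have hvw : v = w := by
    have := sub_eq_zero.mp (hu ▸ huz)
    exact this
  have hxcv : x = (-c) • v := by
    rw [hvw, hw, smul_smul]
    have : (-c) * (-c⁻¹) = 1 := by field_simp
    rw [this, one_smul]
  have hq2 : 0 < x ⬝ᵥ B₂ *ᵥ x := by
    rw [hxcv]
    rw [Matrix.mulVec_smul, smul_dotProduct, dotProduct_smul]
    have : 0 < v ⬝ᵥ B₂ *ᵥ v := hpos
    have hc2 : 0 < (-c) * (-c) := by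
      rcases lt_or_gt_of_ne hcne with h | h
      · nlinarith
      · nlinarith
    rw [smul_eq_mul, smul_eq_mul]
    nlinarith [mul_pos hc2 this]
  linarith
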